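/- arXiv:1405.5827 — 2 statements merged into one kernel-verified Lean document; each statement's English description precedes it below -/
import Mathlib

section
/- Let v : 𝒫^n → Δ(C) be an anonymous randomized voting rule that is weakly strategy-proof and satisfies ε-super-weak unanimity, with m ≥ 3. Then for every pair of candidates x,y ∈ C and every j ∈ {0,…,n}, |v'(x,j) − v'(y,j)| ≤ 14mε. -/
open Finset

section VotingPrelims

variable (C : Type) [Fintype C] [DecidableEq C]

/-- A preference ordering over the subset `A` of candidates: a duplicate-free list
enumerating exactly the members of `A`, where earlier entries are more preferred. -/
def PrefOn (A : Finset C) : Type :=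
  {l : List C // l.Nodup ∧ l.toFinset = A}

/-- A (full) preference ordering on the whole candidate set. -/
abbrev Pref : Type := PrefOn C Finset.univ

variable {C}

noncomputable instance instFintypePrefOn (A : Finset C) : Fintype (PrefOn C A) :=
  Fintype.subtype A.toList.permutations.toFinset (by
    intro l
    rw [List.mem_toFinset, List.mem_permutations]
    constructor
    · intro h
      exact ⟨h.nodup_iff.mpr A.nodup_toList,
        by rw [List.toFinset_eq_of_perm _ _ h, Finset.toList_toFinset]⟩
    · rintro ⟨h1, h2⟩
      exact List.perm_of_nodup_nodup_toFinset_eq h1 A.nodup_toList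
        (by rw [h2, Finset.toList_toFinset]))

instance instDecidableEqPrefOn (A : Finset C) : DecidableEq (PrefOn C A) := fun P Q =>
  decidable_of_iff (P.1 = Q.1) Subtype.ext_iff.symm

/-- `P.pref x y` means that `x` is strictly preferred to `y` in `P`. -/
def PrefOn.pref {A : Finset C} (P : PrefOn C A) (x y : C) : Prop :=
  P.1.idxOf x < P.1.idxOf y

theorem Pref.mem_list (P : Pref C) (z : C) : z ∈ P.1 := by
  rw [← List.mem_toFinset, P.2.2]; exact Finset.mem_univ z

/-- The top (most preferred) candidate of a full preference ordering. -/
noncomputable def Pref.top [Nonempty C] (P : Pref C) : C :=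
  P.1.head?.getD (Classical.arbitrary C)

/-- The most preferred candidate of `S` according to the full preference `P`. -/
noncomputable def Pref.topOn [Nonempty C] (P : Pref C) (S : Finset C) : C :=
  (P.1.filter (fun z => decide (z ∈ S))).head?.getD (Classical.arbitrary C)

/-- The number of voters whose top choice is `x`. -/
noncomputable def topCount [Nonempty C] {n : ℕ} (P : Fin n → Pref C) (x : C) : ℕ :=
  (Finset.univ.filter fun i => (P i).top = x).card

/-- The number of voters whose most preferred candidate among `S` is `x`. -/
noncomputable def countTop [Nonempty C] {n : ℕ} (P : Fin n → Pref C) (S : Finset C)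
    (x : C) : ℕ :=
  (Finset.univ.filter fun i => (P i).topOn S = x).card

/-- The restriction of a full preference ordering to the subset `A`. -/
def Pref.restrictTo (P : Pref C) (A : Finset C) : PrefOn C A :=
  ⟨P.1.filter (fun z => decide (z ∈ A)), P.2.1.filter _, by
    ext z
    simp only [List.mem_toFinset, List.mem_filter, decide_eq_true_eq]
    exact ⟨fun h => h.2, fun h => ⟨Pref.mem_list P z, h⟩⟩⟩

/-- `d` is a probability distribution on the candidates. -/
def IsDist (d : C → ℝ) : Prop :=
  (∀ x, 0 ≤ d x) ∧ ∑ x, d x = 1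

/-- `d` is a probability distribution on the candidates, supported on `A`. -/
def IsDistOn (A : Finset C) (d : C → ℝ) : Prop :=
  IsDist d ∧ ∀ x ∉ A, d x = 0

/-- `v` is a (randomized) voting rule: it maps every profile to a distribution. -/
def IsVotingRule {A : Finset C} {n : ℕ} (v : (Fin n → PrefOn C A) → C → ℝ) : Prop :=
  ∀ P, IsDist (v P)

/-- `φ` is a belief, i.e. a probability distribution over preference orderings. -/
def IsBelief {A : Finset C} (φ : PrefOn C A → ℝ) : Prop :=
  (∀ P, 0 ≤ φ P) ∧ ∑ P, φ P = 1

/-- Anonymity: permuting the voters does not change the outcome distribution. -/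
def Anonymous {A : Finset C} {n : ℕ} (v : (Fin n → PrefOn C A) → C → ℝ) : Prop :=
  ∀ σ : Equiv.Perm (Fin n), ∀ P : Fin n → PrefOn C A, v (fun i => P (σ i)) = v P

/-- Utilities take values in `[0,1]`. -/
def Utility01 (u : C → ℝ) : Prop := ∀ x, 0 ≤ u x ∧ u x ≤ 1

/-- The utility function `u` is consistent with the preference ordering `P` on `A`. -/
def ConsistentOn (A : Finset C) (u : C → ℝ) (P : PrefOn C A) : Prop :=
  ∀ x ∈ A, ∀ y ∈ A, (u y < u x ↔ P.pref x y)

/-- The profile in which voter `i` reports `Pi` and the remaining voters report `R`. -/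
def combine {A : Finset C} {n : ℕ} (i : Fin n) (Pi : PrefOn C A)
    (R : {j : Fin n // j ≠ i} → PrefOn C A) : Fin n → PrefOn C A :=
  fun j => if h : j = i then Pi else R ⟨j, h⟩

/-- The expected utility of voter `i` when reporting `Pi`, where the remaining `n-1`
voters' preferences are drawn i.i.d. from the belief `φ`. -/
noncomputable def EU {A : Finset C} {n : ℕ} (v : (Fin n → PrefOn C A) → C → ℝ)
    (u : C → ℝ) (φ : PrefOn C A → ℝ) (i : Fin n) (Pi : PrefOn C A) : ℝ :=
  ∑ R : {j : Fin n // j ≠ i} → PrefOn C A,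
    (∏ j, φ (R j)) * ∑ x, v (combine i Pi R) x * u x

/-- Strategy-proofness with respect to a set `Φ` of (i.i.d.) beliefs. -/
def SPwrt {A : Finset C} {n : ℕ} (v : (Fin n → PrefOn C A) → C → ℝ)
    (Φ : Set (PrefOn C A → ℝ)) : Prop :=
  ∀ i : Fin n, ∀ Pi Pi' : PrefOn C A, ∀ φ ∈ Φ, IsBelief φ →
    ∀ u : C → ℝ, Utility01 u → ConsistentOn A u Pi →
      EU v u φ i Pi' ≤ EU v u φ i Pi

/-- Weak strategy-proofness: strategy-proofness w.r.t. all (i.i.d.) beliefs. -/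
def WeaklySP {n : ℕ} (v : (Fin n → Pref C) → C → ℝ) : Prop :=
  SPwrt v Set.univ

/-- `ε`-super-weak unanimity. -/
def SuperWeakUnanimity [Nonempty C] {n : ℕ} (v : (Fin n → Pref C) → C → ℝ) (ε : ℝ) : Prop :=
  ∀ x : C, ∃ P : Fin n → Pref C, (∀ i, (P i).top = x) ∧ 1 - ε ≤ v P x

/-- `ε`-strong unanimity. -/
def StrongUnanimity [Nonempty C] {n : ℕ} (v : (Fin n → Pref C) → C → ℝ) (ε : ℝ) : Prop :=
  ∀ x : C, ∀ P : Fin n → Pref C, (∀ i, (P i).top = x) → 1 - ε ≤ v P x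

/-- `ε`-Pareto efficiency. -/
def ParetoEff {n : ℕ} (v : (Fin n → Pref C) → C → ℝ) (ε : ℝ) : Prop :=
  ∀ x y : C, ∀ P : Fin n → Pref C, (∀ i, (P i).pref x y) → v P y ≤ ε

/-- An `α`-coarse belief: all probabilities are integer multiples of some `β ≥ α`. -/
def CoarseBelief {A : Finset C} (α : ℝ) (φ : PrefOn C A → ℝ) : Prop :=
  ∃ β : ℝ, α ≤ β ∧ ∀ P, ∃ k : ℤ, φ P = k * β

/-- An `α`-coarse utility function: any two utilities are equal or at least `α` apart. -/
def CoarseUtility (α : ℝ) (u : C → ℝ) : Prop :=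
  ∀ x y : C, u x = u y ∨ α ≤ |u x - u y|

/-- Large-scale `ε`-strategy-proofness w.r.t. coarse i.i.d. beliefs, with rate `p`. -/
def LargeScaleSP (v : (n : ℕ) → (Fin n → Pref C) → C → ℝ) (ε : ℕ → ℝ) (p : ℝ → ℝ) : Prop :=
  ∀ α : ℝ, 0 < α → ∀ n : ℕ, p (1 / α) ≤ (n : ℝ) →
    ∀ i : Fin n, ∀ Pi Pi' : Pref C, ∀ φ : Pref C → ℝ, IsBelief φ → CoarseBelief α φ →
      ∀ u : C → ℝ, Utility01 u → CoarseUtility α u → ConsistentOn Finset.univ u Pi →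
        EU (v n) u φ i Pi' - ε n ≤ EU (v n) u φ i Pi

/-- The restriction of a belief to the candidate subset `A`. -/
noncomputable def beliefRestrict (φ : Pref C → ℝ) (A : Finset C) : PrefOn C A → ℝ :=
  fun Q => ∑ P : Pref C, if P.restrictTo A = Q then φ P else 0

/-- The punishing voting rule: choose a uniform voter, then her `j`-th ranked candidate
with probability proportional to `m - j`. -/
noncomputable def vPunish (n : ℕ) (P : Fin n → Pref C) (x : C) : ℝ :=
  (1 / (n : ℝ)) * ∑ i : Fin n,
    (((Fintype.card C : ℝ) - ((P i).1.idxOf x + 1)) /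
      (∑ ℓ ∈ Finset.range (Fintype.card C), ((Fintype.card C : ℝ) - ((ℓ : ℝ) + 1))))

end VotingPrelims

section MorePrelims

variable {C : Type} [Fintype C] [DecidableEq C]

/-- `x` is directly above `y` in the preference ordering `P`. -/
def DirectlyAbove (P : Pref C) (x y : C) : Prop :=
  P.pref x y ∧ ∀ z : C, z ≠ x → z ≠ y → (P.pref z x ↔ P.pref z y)

/-- The preference obtained from `P` by exchanging the positions of `x` and `y`. -/
def Pref.swapC (P : Pref C) (x y : C) : Pref C :=
  ⟨P.1.map (Equiv.swap x y), P.2.1.map (Equiv.injective _), by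
    apply Finset.eq_univ_iff_forall.mpr
    intro z
    rw [List.mem_toFinset, List.mem_map]
    exact ⟨Equiv.swap x y z, Pref.mem_list P _, Equiv.swap_apply_self x y z⟩⟩

/-- Pairwise responsiveness. -/
def PairwiseResponsive {n : ℕ} (v : (Fin n → Pref C) → C → ℝ) : Prop :=
  ∀ P : Fin n → Pref C, ∀ i : Fin n, ∀ x y : C, DirectlyAbove (P i) x y →
    ∀ z : C, z ≠ x → z ≠ y →
      v (Function.update P i ((P i).swapC x y)) z = v P z

/-- Pairwise isolation. -/
def PairwiseIsolated {n : ℕ} (v : (Fin n → Pref C) → C → ℝ) : Prop :=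
  ∀ x y : C, ∀ i : Fin n, ∀ P P' : Fin n → Pref C,
    DirectlyAbove (P i) x y → P' i = P i →
    (∀ j : Fin n, (P j).pref x y ↔ (P' j).pref x y) →
      v (Function.update P' i ((P' i).swapC x y)) y - v P' y
        = v (Function.update P i ((P i).swapC x y)) y - v P y

/-- The ordering that puts `x` on top, with the rest ordered as in `a`. -/
def prefTopList (a : Pref C) (x : C) : Pref C :=
  ⟨x :: a.1.erase x, by
    rw [List.nodup_cons]
    exact ⟨a.2.1.not_mem_erase, a.2.1.erase x⟩, by
    apply Finset.eq_univ_iff_forall.mpr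
    intro z
    rw [List.mem_toFinset, List.mem_cons]
    by_cases hz : z = x
    · exact Or.inl hz
    · exact Or.inr ((List.mem_erase_of_ne hz).mpr (Pref.mem_list a z))⟩

/-- The ordering `a` with `x` moved to the bottom. -/
def prefBotList (a : Pref C) (x : C) : Pref C :=
  ⟨a.1.erase x ++ [x], by
    rw [List.nodup_append]
    exact ⟨a.2.1.erase x, List.nodup_singleton x,
      fun z hz b hb hzb => absurd hz (by
        rw [hzb, List.mem_singleton.mp hb]; exact a.2.1.not_mem_erase)⟩, by
    apply Finset.eq_univ_iff_forall.mpr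
    intro z
    rw [List.mem_toFinset, List.mem_append, List.mem_singleton]
    by_cases hz : z = x
    · exact Or.inr hz
    · exact Or.inl ((List.mem_erase_of_ne hz).mpr (Pref.mem_list a z))⟩

/-- The profile `P⃗^{x,j}`: the first `j` voters rank `x` first followed by the remaining
candidates in the order `a`; the remaining voters use `a` with `x` moved to the bottom. -/
def profileXJ (a : Pref C) (x : C) (j : ℕ) (n : ℕ) : Fin n → Pref C :=
  fun i => if (i : ℕ) < j then prefTopList a x else prefBotList a x

/-- `v'(x,j)`: the selection probability of `x` on the profile `P⃗^{x,j}`. -/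
def vPrime {n : ℕ} (v : (Fin n → Pref C) → C → ℝ) (a : Pref C) (x : C) (j : ℕ) : ℝ :=
  v (profileXJ a x j n) x

/-- One round of repeated-plurality elimination with margin `T`: keep exactly the
candidates of `S` whose top-choice count is within `T` of the highest count. -/
noncomputable def plStep [Nonempty C] {n : ℕ} (P : Fin n → Pref C) (T : ℝ) (S : Finset C) :
    Finset C :=
  S.filter (fun x => ((S.sup (countTop P S) : ℕ) : ℝ) ≤ (countTop P S x : ℝ) + T)

/-- The set of remaining candidates after repeated-plurality elimination. -/
noncomputable def plFinal [Nonempty C] {n : ℕ} (P : Fin n → Pref C) (T : ℝ) : Finset C :=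
  (fun S => plStep P T S)^[Fintype.card C] Finset.univ

/-- The plurality winner among `S`, with ties broken by `tb`. -/
noncomputable def pluralityWinner [Nonempty C] {n : ℕ} (tb : Finset C → C)
    (P : Fin n → Pref C) (S : Finset C) : C :=
  tb (S.filter (fun x => countTop P S x = S.sup (countTop P S)))

/-- Repeated Plurality Elimination + Plurality Selection. -/
noncomputable def vPl [Nonempty C] (δ : ℝ) (tb : Finset C → C) (n : ℕ)
    (P : Fin n → Pref C) (x : C) : ℝ :=
  if x = pluralityWinner tb P (plFinal P ((n : ℝ) ^ ((1 : ℝ) / 2 + δ))) then 1 else 0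

/-- One round of approximate instant-runoff elimination with margin `T`: eliminate the
candidates of `S` whose top-choice count is within `T` of the least count, unless this
would eliminate everyone. -/
noncomputable def irvStep [Nonempty C] {n : ℕ} (P : Fin n → Pref C) (T : ℝ) (S : Finset C) :
    Finset C :=
  if h : S.Nonempty then
    let E := S.filter (fun x =>
      (countTop P S x : ℝ) ≤ (((S.image (countTop P S)).min' (h.image _) : ℕ) : ℝ) + T)
    if E = S then S else S \ E
  else S

/-- The set of remaining candidates after approximate instant-runoff elimination. -/
noncomputable def irvFinal [Nonempty C] {n : ℕ} (P : Fin n → Pref C) (T : ℝ) : Finset C :=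
  (fun S => irvStep P T S)^[Fintype.card C] Finset.univ

/-- Approximate Instant-Runoff Voting. -/
noncomputable def vIrv [Nonempty C] (δ : ℝ) (tb : Finset C → C) (n : ℕ)
    (P : Fin n → Pref C) (x : C) : ℝ :=
  if x = pluralityWinner tb P (irvFinal P ((n : ℝ) ^ ((1 : ℝ) / 2 + δ))) then 1 else 0

/-- The position (0-indexed rank) of candidate `x` in the ordering `P`. -/
def Pref.rank (P : Pref C) (x : C) : Fin (Fintype.card C) :=
  ⟨P.1.idxOf x, by
    have hx : x ∈ P.1 := Pref.mem_list P x
    have hlen : P.1.length = Fintype.card C := by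
      rw [← List.toFinset_card_of_nodup P.2.1, P.2.2, Finset.card_univ]
    rw [← hlen]
    exact List.idxOf_lt_length_iff.mpr hx⟩

/-- The score of candidate `x` under the positional scoring rule with points vector `pv`. -/
def scoreOf (pv : Fin (Fintype.card C) → ℕ) {n : ℕ} (P : Fin n → Pref C) (x : C) : ℕ :=
  ∑ i : Fin n, pv ((P i).rank x)

/-- Scoring Rule Elimination + Input-Independent Selection. -/
noncomputable def vScore (δ : ℝ) (pv : Fin (Fintype.card C) → ℕ) (sel : Finset C → C → ℝ)
    (n : ℕ) (P : Fin n → Pref C) (x : C) : ℝ :=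
  sel (Finset.univ.filter (fun y =>
    ((Finset.univ.sup (scoreOf pv P) : ℕ) : ℝ) ≤ (scoreOf pv P y : ℝ) + (n : ℝ) ^ ((1 : ℝ) / 2 + δ))) x

end MorePrelims



namespace Stmt6Aux

lemma sum_superset_sign {J : Type} [Fintype J] [DecidableEq J] (T : Finset J) :
    ∑ s : Finset J, (if T ⊆ s then ((-1:ℝ))^(Fintype.card J - s.card) else 0)
      = if T = Finset.univ then 1 else 0 := by
  classical
  let e : Finset J ≃ Finset J := ⟨compl, compl, compl_compl, compl_compl⟩
  rw [← Equiv.sum_comp e (fun s => if T ⊆ s then ((-1:ℝ))^(Fintype.card J - s.card) else 0)]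
  have step : ∀ s : Finset J,
      (if T ⊆ (e s) then ((-1:ℝ))^(Fintype.card J - (e s).card) else 0)
        = (if s ∈ Tᶜ.powerset then ((-1:ℝ))^(s.card) else 0) := by
    intro s
    have h1 : T ⊆ e s ↔ s ∈ Tᶜ.powerset := by
      simp only [e, Equiv.coe_fn_mk, mem_powerset]
      exact (Finset.subset_compl_comm).symm
    have h2 : Fintype.card J - (e s).card = s.card := by
      have := Finset.card_le_univ s
      simp only [e, Equiv.coe_fn_mk, Finset.card_compl]
      omega
    rw [h2]
    exact if_congr h1 rfl rfl
  rw [Finset.sum_congr rfl (fun s _ => step s)]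
  rw [Finset.sum_ite_mem, Finset.univ_inter]
  have : ∑ s ∈ Tᶜ.powerset, ((-1:ℝ))^s.card
      = ((∑ s ∈ Tᶜ.powerset, ((-1:ℤ))^s.card : ℤ) : ℝ) := by
    push_cast; rfl
  rw [this, Finset.sum_powerset_neg_one_pow_card]
  by_cases h : T = Finset.univ
  · simp [h]
  · have : ¬ (Tᶜ = ∅) := by
      rw [Finset.compl_eq_empty_iff]; exact h
    simp [h, this]

lemma count_expand {J ι : Type} [Fintype J] [DecidableEq J] [Fintype ι] [DecidableEq ι]
    (s : Finset J) (R₀ : J → ι) (g : (J → ι) → ℝ) :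
    ∑ R : J → ι, (∏ j, ((s.filter fun l => R₀ l = R j).card : ℝ)) * g R
      = ∑ p ∈ Fintype.piFinset (fun _ : J => s), g (R₀ ∘ p) := by
  classical
  have h1 : ∀ R : J → ι, (∏ j, ((s.filter fun l => R₀ l = R j).card : ℝ))
      = ∑ p ∈ Fintype.piFinset (fun _ : J => s),
          ∏ j, (if R₀ (p j) = R j then (1:ℝ) else 0) := by
    intro R
    have h0 : ∀ j, ((s.filter fun l => R₀ l = R j).card : ℝ)
        = ∑ l ∈ s, (if R₀ l = R j then (1:ℝ) else 0) := by
      intro j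
      rw [Finset.card_filter]
      push_cast
      rfl
    rw [Finset.prod_congr rfl (fun j _ => h0 j)]
    exact Finset.prod_univ_sum _ _
  rw [Finset.sum_congr rfl (fun R _ => by rw [h1 R, Finset.sum_mul])]
  rw [Finset.sum_comm]
  apply Finset.sum_congr rfl
  intro p _
  have hb : ∀ R : J → ι, (∏ j, (if R₀ (p j) = R j then (1:ℝ) else 0))
      = if (∀ j, R₀ (p j) = R j) then (1:ℝ) else 0 := by
    intro R
    rw [Finset.prod_boole]
    simp
  rw [Fintype.sum_eq_single (R₀ ∘ p) ?h]
  · rw [hb]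
    simp
  · intro R hR
    rw [hb]
    have : ¬ (∀ j, R₀ (p j) = R j) := by
      intro hall
      have h2 : R₀ ∘ p = R := funext fun j => hall j
      exact hR h2.symm
    simp [this]

lemma polarization {J ι : Type} [Fintype J] [DecidableEq J] [Fintype ι] [DecidableEq ι]
    [Nonempty ι] (g : (J → ι) → ℝ) (R₀ : J → ι)
    (hsym : ∀ h : J → J, Function.Bijective h → g (R₀ ∘ h) = g R₀)
    (hF : ∀ φ : ι → ℝ, (∀ q, 0 ≤ φ q) → (∑ q, φ q = 1) →
      ∑ R : J → ι, (∏ j, φ (R j)) * g R = 0) :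
    g R₀ = 0 := by
  classical
  by_cases hJ : Nonempty J
  case neg =>
    haveI : IsEmpty J := not_nonempty_iff.mp hJ
    have huni : ∀ R : J → ι, R = R₀ := fun R => funext fun j => (IsEmpty.false j).elim
    have h := hF (fun _ => (Fintype.card ι : ℝ)⁻¹)
      (fun q => by positivity)
      (by
        rw [Finset.sum_const, Finset.card_univ, nsmul_eq_mul]
        rw [mul_inv_cancel₀]
        exact_mod_cast Fintype.card_ne_zero)
    rw [Fintype.sum_eq_single R₀ (fun R hR => absurd (huni R) hR)] at h
    simpa using h
  case pos =>
  haveI := hJ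
  -- G s = 0 for every s
  have hG0 : ∀ s : Finset J,
      ∑ R : J → ι, (∏ j, ((s.filter fun l => R₀ l = R j).card : ℝ)) * g R = 0 := by
    intro s
    rcases s.eq_empty_or_nonempty with rfl | hs
    · apply Finset.sum_eq_zero
      intro R _
      have : ∏ j, (((∅ : Finset J).filter fun l => R₀ l = R j).card : ℝ) = 0 :=
        Finset.prod_eq_zero (Finset.mem_univ (Classical.arbitrary J)) (by simp)
      rw [this, zero_mul]
    · have hc : (0:ℝ) < (s.card : ℝ) := by exact_mod_cast Finset.card_pos.mpr hs
      have hsum : ∑ q, ((s.filter fun l => R₀ l = q).card : ℝ) = (s.card : ℝ) := by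
        have : s.card = ∑ q : ι, (s.filter fun l => R₀ l = q).card :=
          Finset.card_eq_sum_card_fiberwise (fun l _ => Finset.mem_univ (R₀ l))
        rw [this]
        push_cast
        rfl
      have h := hF (fun q => ((s.filter fun l => R₀ l = q).card : ℝ) / s.card)
        (fun q => by positivity)
        (by rw [← Finset.sum_div, hsum, div_self hc.ne'])
      have hexp : ∀ R : J → ι,
          (∏ j, (((s.filter fun l => R₀ l = R j).card : ℝ) / (s.card:ℝ)))
            = (∏ j, ((s.filter fun l => R₀ l = R j).card : ℝ)) / (s.card:ℝ)^(Fintype.card J) := by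
        intro R
        rw [Finset.prod_div_distrib, Finset.prod_const, Finset.card_univ]
      rw [Finset.sum_congr rfl (fun R _ => by rw [hexp R, div_mul_eq_mul_div])] at h
      rw [← Finset.sum_div] at h
      rcases div_eq_zero_iff.mp h with h' | h'
      · exact h'
      · exact absurd h' (pow_ne_zero _ hc.ne')
  have zz : ∑ s : Finset J, ((-1:ℝ))^(Fintype.card J - s.card) *
      (∑ p ∈ Fintype.piFinset (fun _ : J => s), g (R₀ ∘ p)) = 0 := by
    rw [Finset.sum_congr rfl (fun s _ => by rw [← count_expand s R₀ g, hG0 s, mul_zero])]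
    simp
  have w : ∑ s : Finset J, ((-1:ℝ))^(Fintype.card J - s.card) *
      (∑ p ∈ Fintype.piFinset (fun _ : J => s), g (R₀ ∘ p))
      = ∑ h : J → J, (if Function.Surjective h then (1:ℝ) else 0) * g (R₀ ∘ h) := by
    have step1 : ∀ s : Finset J, ((-1:ℝ))^(Fintype.card J - s.card) *
        ∑ p ∈ Fintype.piFinset (fun _ : J => s), g (R₀ ∘ p)
        = ∑ h : J → J, ((-1:ℝ))^(Fintype.card J - s.card) *
            (if (∀ j, h j ∈ s) then g (R₀ ∘ h) else 0) := by
      intro s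
      have : Fintype.piFinset (fun _ : J => s)
          = Finset.univ.filter (fun h : J → J => ∀ j, h j ∈ s) := by
        ext p
        simp [Fintype.mem_piFinset]
      rw [this, Finset.sum_filter, Finset.mul_sum]
    rw [Finset.sum_congr rfl (fun s _ => step1 s), Finset.sum_comm]
    apply Finset.sum_congr rfl
    intro h _
    have himg : ∀ s : Finset J, (∀ j, h j ∈ s) ↔ Finset.univ.image h ⊆ s := by
      intro s
      rw [Finset.image_subset_iff]
      simp
    have hs1 : ∀ s : Finset J, ((-1:ℝ))^(Fintype.card J - s.card) *
        (if (∀ j, h j ∈ s) then g (R₀ ∘ h) else 0)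
        = (if Finset.univ.image h ⊆ s then ((-1:ℝ))^(Fintype.card J - s.card) else 0) * g (R₀ ∘ h) := by
      intro s
      rw [if_congr (himg s) rfl rfl]
      by_cases hc : Finset.univ.image h ⊆ s <;> simp [hc]
    rw [Finset.sum_congr rfl (fun s _ => hs1 s), ← Finset.sum_mul, sum_superset_sign]
    have : (Finset.univ.image h = Finset.univ) ↔ Function.Surjective h := by
      constructor
      · intro he y
        have : y ∈ Finset.univ.image h := by rw [he]; exact Finset.mem_univ y
        simpa using this
      · intro hsurj
        apply Finset.eq_univ_iff_forall.mpr
        intro y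
        obtain ⟨x, hx⟩ := hsurj y
        exact Finset.mem_image.mpr ⟨x, Finset.mem_univ x, hx⟩
    by_cases hc : Function.Surjective h
    · rw [if_pos (this.mpr hc), if_pos hc]
    · rw [if_neg (fun hcc => hc (this.mp hcc)), if_neg hc]
  rw [w] at zz
  have final : ∑ h : J → J, (if Function.Surjective h then (1:ℝ) else 0) * g (R₀ ∘ h)
      = (∑ h : J → J, if Function.Surjective h then (1:ℝ) else 0) * g R₀ := by
    rw [Finset.sum_mul]
    apply Finset.sum_congr rfl
    intro h _
    by_cases hc : Function.Surjective h
    · rw [hsym h hc.bijective_of_finite]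
    · simp [hc]
  rw [final] at zz
  rcases mul_eq_zero.mp zz with h' | h'
  · exfalso
    have hcpos : (0:ℝ) < ∑ h : J → J, if Function.Surjective h then (1:ℝ) else 0 := by
      apply Finset.sum_pos' (fun h _ => by positivity)
      exact ⟨id, Finset.mem_univ id, by simp [Function.surjective_id]⟩
    exact hcpos.ne' h'
  · exact h'

end Stmt6Aux

section VotingLemmas

open Finset

variable {C : Type} [Fintype C] [DecidableEq C] [Nonempty C]

/-- `U` is the set of the first `k` entries of `Q`. -/
def IsPrefSet (U : Finset C) (Q : Pref C) : Prop := ∃ k, U = (Q.1.take k).toFinset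

lemma pref_length (Q : Pref C) : Q.1.length = Fintype.card C := by
  rw [← List.toFinset_card_of_nodup Q.2.1, Q.2.2, Finset.card_univ]

lemma idx_lt_card (Q : Pref C) (z : C) : Q.1.idxOf z < Fintype.card C := by
  rw [← pref_length Q]; exact List.idxOf_lt_length_iff.mpr (Pref.mem_list Q z)

lemma idx_lt_of_mem_take : ∀ (l : List C) (k : ℕ) (x : C), x ∈ l.take k → l.idxOf x < k := by
  intro l
  induction l with
  | nil => intro k x hx; simp at hx
  | cons a l ih =>
    intro k x hx
    cases k with
    | zero => simp at hx
    | succ k =>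
      rw [List.take_succ_cons] at hx
      by_cases hxa : x = a
      · subst hxa; rw [List.idxOf_cons_self]; omega
      · rcases List.mem_cons.mp hx with h | h
        · exact absurd h hxa
        · rw [List.idxOf_cons_ne _ (fun h' => hxa h'.symm)]
          have := ih k x h
          omega

lemma le_idx_of_not_mem_take : ∀ (l : List C) (k : ℕ) (x : C), x ∈ l → x ∉ l.take k →
    k ≤ l.idxOf x := by
  intro l
  induction l with
  | nil => intro k x hx _; simp at hx
  | cons a l ih =>
    intro k x hx hnx
    cases k with
    | zero => omega
    | succ k =>
      rw [List.take_succ_cons] at hnx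
      have hxa : x ≠ a := fun h => hnx (h ▸ List.mem_cons_self)
      have hxl : x ∈ l := by
        rcases List.mem_cons.mp hx with h | h
        · exact absurd h hxa
        · exact h
      have hnx' : x ∉ l.take k := fun h => hnx (List.mem_cons_of_mem a h)
      rw [List.idxOf_cons_ne _ (fun h' => hxa h'.symm)]
      have := ih k x hxl hnx'
      omega

lemma nonneg_of_forall_small {F K t₀ : ℝ} (ht₀ : 0 < t₀)
    (h : ∀ t, 0 < t → t < t₀ → 0 ≤ F + t * K) : 0 ≤ F := by
  by_contra hF
  push_neg at hF
  set t : ℝ := min (t₀/2) (-F / (|K| + 1)) with htdef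
  have habs : (0:ℝ) < |K| + 1 := by positivity
  have ht1 : 0 < t := by
    apply lt_min (by linarith)
    apply div_pos (by linarith) habs
  have ht2 : t < t₀ := lt_of_le_of_lt (min_le_left _ _) (by linarith)
  have h3 := h t ht1 ht2
  have h4 : t * K ≤ t * |K| := mul_le_mul_of_nonneg_left (le_abs_self K) ht1.le
  have h5 : t * |K| ≤ (-F / (|K| + 1)) * |K| := by
    apply mul_le_mul_of_nonneg_right (min_le_right _ _) (abs_nonneg K)
  have h6 : (-F / (|K| + 1)) * |K| < -F := by
    rw [div_mul_eq_mul_div, div_lt_iff₀ habs]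
    have : (0:ℝ) < -F := by linarith
    nlinarith [abs_nonneg K]
  linarith

/-- The crucial consequence of weak strategy-proofness: for every belief, the expected
probability mass on any prefix-set of the truthful ordering does not increase upon
misreporting. -/
lemma sp_prefix {n : ℕ} {v : (Fin n → Pref C) → C → ℝ} (hsp : WeaklySP v)
    (i : Fin n) (Q₁ Q₂ : Pref C) (U : Finset C) (hU : IsPrefSet U Q₁)
    (φ : Pref C → ℝ) (hφ : IsBelief φ) :
    0 ≤ ∑ R : {j : Fin n // j ≠ i} → Pref C, (∏ j, φ (R j)) *
        ((∑ z ∈ U, v (combine i Q₁ R) z) - (∑ z ∈ U, v (combine i Q₂ R) z)) := by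
  classical
  obtain ⟨k, hUk⟩ := hU
  set M : ℝ := (Fintype.card C : ℝ) with hM
  have hM1 : (1:ℝ) ≤ M := by
    rw [hM]; exact_mod_cast Fintype.card_pos
  set η : C → ℝ := fun z => if z ∈ U then -((Q₁.1.idxOf z : ℝ) + 1) else (M - (Q₁.1.idxOf z : ℝ))
    with hη
  set K : ℝ := ∑ R : {j : Fin n // j ≠ i} → Pref C, (∏ j, φ (R j)) *
      (∑ z, (v (combine i Q₁ R) z - v (combine i Q₂ R) z) * η z) with hK
  apply nonneg_of_forall_small (t₀ := 1/(2*M)) (K := K) (by positivity)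
  intro t ht htM
  have htM2 : t * M < 1/2 := by
    rw [lt_div_iff₀ (by positivity)] at htM
    nlinarith
  -- the utility function
  set u : C → ℝ := fun z => (if z ∈ U then (1:ℝ) else 0) + t * η z with hu
  -- basic index facts
  have hidx : ∀ z : C, (Q₁.1.idxOf z : ℝ) + 1 ≤ M := by
    intro z
    have := idx_lt_card Q₁ z
    rw [hM]
    exact_mod_cast this
  have hidx0 : ∀ z : C, (0:ℝ) ≤ (Q₁.1.idxOf z : ℝ) := fun z => by positivity
  have huU : ∀ z ∈ U, u z = 1 - t * ((Q₁.1.idxOf z : ℝ) + 1) := by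
    intro z hz; rw [hu]; simp only [if_pos hz, hη, if_pos hz]; ring
  have huNU : ∀ z ∉ U, u z = t * (M - (Q₁.1.idxOf z : ℝ)) := by
    intro z hz; rw [hu]; simp only [if_neg hz, hη, if_neg hz]; ring
  have hubounds : ∀ z : C, (z ∈ U → 1/2 < u z ∧ u z ≤ 1) ∧ (z ∉ U → 0 < u z ∧ u z < 1/2) := by
    intro z
    constructor
    · intro hz
      rw [huU z hz]
      have h1 := hidx z
      have h2 := hidx0 z
      constructor <;> nlinarith
    · intro hz
      rw [huNU z hz]
      have h1 := hidx z
      have h2 := hidx0 z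
      constructor <;> nlinarith
  have hu01 : Utility01 u := by
    intro z
    by_cases hz : z ∈ U
    · obtain ⟨h1, h2⟩ := (hubounds z).1 hz
      exact ⟨le_trans (by norm_num) h1.le, h2⟩
    · obtain ⟨h1, h2⟩ := (hubounds z).2 hz
      exact ⟨h1.le, le_trans h2.le (by norm_num)⟩
  have hcons : ConsistentOn Finset.univ u Q₁ := by
    intro x _ y _
    show u y < u x ↔ Q₁.pref x y
    have hprefiff : Q₁.pref x y ↔ Q₁.1.idxOf x < Q₁.1.idxOf y := Iff.rfl
    by_cases hx : x ∈ U <;> by_cases hy : y ∈ U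
    · rw [huU x hx, huU y hy, hprefiff]
      constructor
      · intro h
        by_contra hcon
        push_neg at hcon
        have : (Q₁.1.idxOf y : ℝ) ≤ (Q₁.1.idxOf x : ℝ) := by exact_mod_cast hcon
        nlinarith
      · intro h
        have : (Q₁.1.idxOf x : ℝ) < (Q₁.1.idxOf y : ℝ) := by exact_mod_cast h
        nlinarith
    · -- x ∈ U, y ∉ U : both sides true
      have hxy : Q₁.1.idxOf x < Q₁.1.idxOf y := by
        apply lt_of_lt_of_le (idx_lt_of_mem_take Q₁.1 k x ?_) (le_idx_of_not_mem_take Q₁.1 k y (Pref.mem_list Q₁ y) ?_)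
        · rw [hUk] at hx; exact List.mem_toFinset.mp hx
        · rw [hUk] at hy; exact fun h => hy (List.mem_toFinset.mpr h)
      have h1 := (hubounds x).1 hx
      have h2 := (hubounds y).2 hy
      rw [hprefiff]
      constructor
      · intro _; exact hxy
      · intro _; exact h2.2.trans h1.1
    · -- x ∉ U, y ∈ U : both sides false
      have hxy : Q₁.1.idxOf y < Q₁.1.idxOf x := by
        apply lt_of_lt_of_le (idx_lt_of_mem_take Q₁.1 k y ?_) (le_idx_of_not_mem_take Q₁.1 k x (Pref.mem_list Q₁ x) ?_)
        · rw [hUk] at hy; exact List.mem_toFinset.mp hy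
        · rw [hUk] at hx; exact fun h => hx (List.mem_toFinset.mpr h)
      have h1 := (hubounds y).1 hy
      have h2 := (hubounds x).2 hx
      rw [hprefiff]
      constructor
      · intro h; exact absurd h (asymm (h2.2.trans h1.1))
      · intro h; omega
    · rw [huNU x hx, huNU y hy, hprefiff]
      constructor
      · intro h
        by_contra hcon
        push_neg at hcon
        have : (Q₁.1.idxOf y : ℝ) ≤ (Q₁.1.idxOf x : ℝ) := by exact_mod_cast hcon
        nlinarith
      · intro h
        have : (Q₁.1.idxOf x : ℝ) < (Q₁.1.idxOf y : ℝ) := by exact_mod_cast h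
        nlinarith
  have hle := hsp i Q₁ Q₂ φ (Set.mem_univ φ) hφ u hu01 hcons
  -- now rewrite the EU difference
  have hdiff : EU v u φ i Q₁ - EU v u φ i Q₂
      = (∑ R : {j : Fin n // j ≠ i} → Pref C, (∏ j, φ (R j)) *
          ((∑ z ∈ U, v (combine i Q₁ R) z) - (∑ z ∈ U, v (combine i Q₂ R) z))) + t * K := by
    rw [EU, EU, ← Finset.sum_sub_distrib]
    rw [hK, Finset.mul_sum, ← Finset.sum_add_distrib]
    apply Finset.sum_congr rfl
    intro R _
    have expand : ∑ x, v (combine i Q₁ R) x * u x - ∑ x, v (combine i Q₂ R) x * u x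
        = ∑ x, (v (combine i Q₁ R) x - v (combine i Q₂ R) x) * u x := by
      rw [← Finset.sum_sub_distrib]
      apply Finset.sum_congr rfl
      intro x _
      ring
    rw [mul_sub, ← mul_sub, expand]
    have expand2 : ∑ x, (v (combine i Q₁ R) x - v (combine i Q₂ R) x) * u x
        = ((∑ z ∈ U, v (combine i Q₁ R) z) - (∑ z ∈ U, v (combine i Q₂ R) z))
          + t * (∑ z, (v (combine i Q₁ R) z - v (combine i Q₂ R) z) * η z) := by
      have huz : ∀ x, (v (combine i Q₁ R) x - v (combine i Q₂ R) x) * u x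
          = (if x ∈ U then (v (combine i Q₁ R) x - v (combine i Q₂ R) x) else 0)
            + t * ((v (combine i Q₁ R) x - v (combine i Q₂ R) x) * η x) := by
        intro x
        rw [hu]
        by_cases hx : x ∈ U <;> simp [hx] <;> ring
      rw [Finset.sum_congr rfl (fun x _ => huz x), Finset.sum_add_distrib]
      congr 1
      · rw [Finset.sum_ite_mem, Finset.univ_inter, Finset.sum_sub_distrib]
      · rw [Finset.mul_sum]
    rw [expand2]
    ring
  linarith [hdiff ▸ sub_nonneg.mpr hle]

instance : Nonempty (Pref C) :=
  ⟨⟨Finset.univ.toList, Finset.nodup_toList _, by simp⟩⟩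

lemma combine_comp {n : ℕ} (i : Fin n) (Q' : Pref C) (R : {j : Fin n // j ≠ i} → Pref C)
    (σ : Equiv.Perm {j : Fin n // j ≠ i}) :
    combine i Q' (R ∘ ⇑σ) = fun l => combine i Q' R (Equiv.Perm.ofSubtype σ l) := by
  funext l
  by_cases hl : l = i
  · have h0 : Equiv.Perm.ofSubtype σ l = l := by
      apply Equiv.Perm.ofSubtype_apply_of_not_mem
      simp [hl]
    rw [h0]
    simp [combine, hl]
  · have h1 : Equiv.Perm.ofSubtype σ l = ↑(σ ⟨l, hl⟩) := Equiv.Perm.ofSubtype_apply_of_mem σ hl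
    show (combine i Q' (R ∘ ⇑σ)) l = combine i Q' R (Equiv.Perm.ofSubtype σ l)
    rw [h1]
    simp only [combine, Function.comp_apply]
    rw [dif_neg hl, dif_neg (σ ⟨l, hl⟩).2]

lemma combine_fst {n : ℕ} (i : Fin n) (P : Fin n → Pref C) :
    combine i (P i) (fun j : {j : Fin n // j ≠ i} => P j) = P := by
  funext l
  by_cases hl : l = i
  · subst hl; rw [combine, dif_pos rfl]
  · rw [combine, dif_neg hl]

lemma combine_upd {n : ℕ} (i : Fin n) (Q : Pref C) (P : Fin n → Pref C) :
    combine i Q (fun j : {j : Fin n // j ≠ i} => P j) = Function.update P i Q := by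
  funext l
  by_cases hl : l = i
  · subst hl; rw [combine, dif_pos rfl, Function.update_self]
  · rw [combine, dif_neg hl, Function.update_of_ne hl]

/-- Lemma E (single voter): replacing voter `i`'s ordering with another ordering sharing
the prefix-set `U` does not change the probability of `U`. -/
lemma lemE {n : ℕ} {v : (Fin n → Pref C) → C → ℝ} (hanon : Anonymous v) (hsp : WeaklySP v)
    (P : Fin n → Pref C) (i : Fin n) (Q : Pref C) (U : Finset C)
    (h1 : IsPrefSet U (P i)) (h2 : IsPrefSet U Q) :
    ∑ z ∈ U, v (Function.update P i Q) z = ∑ z ∈ U, v P z := by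
  classical
  set g : ({j : Fin n // j ≠ i} → Pref C) → ℝ := fun R =>
    (∑ z ∈ U, v (combine i (P i) R) z) - (∑ z ∈ U, v (combine i Q R) z) with hg
  have hinv : ∀ (Q' : Pref C) (R : {j : Fin n // j ≠ i} → Pref C)
      (σ : Equiv.Perm {j : Fin n // j ≠ i}),
      v (combine i Q' (R ∘ ⇑σ)) = v (combine i Q' R) := by
    intro Q' R σ
    rw [combine_comp i Q' R σ]
    exact hanon (Equiv.Perm.ofSubtype σ) (combine i Q' R)
  have hsym : ∀ h : {j : Fin n // j ≠ i} → {j : Fin n // j ≠ i}, Function.Bijective h →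
      g ((fun j : {j : Fin n // j ≠ i} => P j) ∘ h) = g (fun j : {j : Fin n // j ≠ i} => P j) := by
    intro h hb
    have key : g ((fun j : {j : Fin n // j ≠ i} => P j) ∘ ⇑(Equiv.ofBijective h hb))
        = g (fun j : {j : Fin n // j ≠ i} => P j) := by
      simp only [hg]
      rw [hinv (P i) _ (Equiv.ofBijective h hb), hinv Q _ (Equiv.ofBijective h hb)]
    exact key
  have hF : ∀ φ : Pref C → ℝ, (∀ q, 0 ≤ φ q) → (∑ q, φ q = 1) →
      ∑ R : {j : Fin n // j ≠ i} → Pref C, (∏ j, φ (R j)) * g R = 0 := by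
    intro φ hp hs
    have hA := sp_prefix hsp i (P i) Q U h1 φ ⟨hp, hs⟩
    have hB := sp_prefix hsp i Q (P i) U h2 φ ⟨hp, hs⟩
    have hBC : ∑ R : {j : Fin n // j ≠ i} → Pref C, (∏ j, φ (R j)) *
        ((∑ z ∈ U, v (combine i Q R) z) - (∑ z ∈ U, v (combine i (P i) R) z))
        = - ∑ R : {j : Fin n // j ≠ i} → Pref C, (∏ j, φ (R j)) * g R := by
      rw [← Finset.sum_neg_distrib]
      apply Finset.sum_congr rfl
      intro R _
      rw [hg]
      ring
    rw [hBC] at hB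
    exact le_antisymm (neg_nonneg.mp hB) hA
  have := Stmt6Aux.polarization g (fun j : {j : Fin n // j ≠ i} => P j) hsym hF
  rw [hg] at this
  simp only [combine_fst, combine_upd] at this
  linarith [this]

/-- Lemma E (many voters). -/
lemma lemE_multi {n : ℕ} {v : (Fin n → Pref C) → C → ℝ} (hanon : Anonymous v) (hsp : WeaklySP v)
    (U : Finset C) :
    ∀ (s : Finset (Fin n)) (P P' : Fin n → Pref C),
      (∀ i, P i = P' i ∨ (IsPrefSet U (P i) ∧ IsPrefSet U (P' i))) →
      (∀ i ∉ s, P i = P' i) →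
      ∑ z ∈ U, v P z = ∑ z ∈ U, v P' z := by
  classical
  intro s
  induction s using Finset.induction_on with
  | empty =>
    intro P P' h hout
    have : P = P' := funext fun i => hout i (by simp)
    rw [this]
  | @insert a s _ ih =>
    intro P P' h hout
    have step : ∑ z ∈ U, v (Function.update P a (P' a)) z = ∑ z ∈ U, v P z := by
      rcases h a with he | ⟨hp1, hp2⟩
      · rw [← he, Function.update_eq_self]
      · exact lemE hanon hsp P a (P' a) U hp1 hp2
    rw [← step]
    apply ih
    · intro i
      by_cases hia : i = a
      · subst hia; left; rw [Function.update_self]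
      · rw [Function.update_of_ne hia]
        exact h i
    · intro i his
      by_cases hia : i = a
      · subst hia; rw [Function.update_self]
      · rw [Function.update_of_ne hia]
        exact hout i (by simp [hia, his])

lemma pref_ne_nil (Q : Pref C) : Q.1 ≠ [] := by
  intro h
  have h2 := Q.2.2
  rw [h] at h2
  simp at h2
  obtain ⟨c⟩ := (inferInstance : Nonempty C)
  have := Finset.eq_empty_iff_forall_notMem.mp h2.symm c
  exact this (Finset.mem_univ c)

lemma exists_cons_of_top {Q : Pref C} {x : C} (h : Q.top = x) : ∃ l, Q.1 = x :: l := by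
  rcases hl : Q.1 with _ | ⟨b, l⟩
  · exact absurd hl (pref_ne_nil Q)
  · refine ⟨l, ?_⟩
    rw [Pref.top, hl] at h
    simp at h
    rw [h]

lemma isPref_head {Q : Pref C} {x : C} {l : List C} (h : Q.1 = x :: l) :
    IsPrefSet {x} Q := ⟨1, by rw [h]; simp⟩

lemma isPref_last {Q : Pref C} {x : C} {l : List C} (h : Q.1 = l ++ [x]) :
    IsPrefSet (Finset.univ.erase x) Q := by
  refine ⟨l.length, ?_⟩
  rw [h, List.take_left]
  have hnd : (l ++ [x]).Nodup := h ▸ Q.2.1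
  have hxl : x ∉ l := by
    rw [List.nodup_append] at hnd
    intro hx
    exact hnd.2.2 x hx x (List.mem_singleton_self x) rfl
  ext z
  simp only [Finset.mem_erase, Finset.mem_univ, and_true, List.mem_toFinset]
  constructor
  · intro hz
    have : z ∈ l ++ [x] := by
      have := Pref.mem_list Q z
      rw [h] at this
      exact this
    rcases List.mem_append.mp this with h' | h'
    · exact h'
    · exact absurd (List.mem_singleton.mp h') hz
  · intro hz
    intro heq
    rw [heq] at hz
    exact hxl hz

/-- All profiles in which every voter ranks `x` on top give `x` probability `≥ 1 - ε`. -/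
lemma unan_ge {n : ℕ} {v : (Fin n → Pref C) → C → ℝ} {ε : ℝ} (hanon : Anonymous v)
    (hsp : WeaklySP v) (hswu : SuperWeakUnanimity v ε) (x : C) (P : Fin n → Pref C)
    (hP : ∀ i, ∃ l, (P i).1 = x :: l) : 1 - ε ≤ v P x := by
  obtain ⟨Ps, htop, hval⟩ := hswu x
  have heq : ∑ z ∈ {x}, v Ps z = ∑ z ∈ {x}, v P z := by
    apply lemE_multi hanon hsp {x} Finset.univ Ps P
    · intro i
      right
      obtain ⟨l1, hl1⟩ := exists_cons_of_top (htop i)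
      obtain ⟨l2, hl2⟩ := hP i
      exact ⟨isPref_head hl1, isPref_head hl2⟩
    · intro i hi
      exact absurd (Finset.mem_univ i) hi
  simp only [Finset.sum_singleton] at heq
  rw [← heq]
  exact hval

lemma eps_nonneg {n : ℕ} {v : (Fin n → Pref C) → C → ℝ} {ε : ℝ} (hv : IsVotingRule v)
    (hswu : SuperWeakUnanimity v ε) : 0 ≤ ε := by
  obtain ⟨c⟩ := (inferInstance : Nonempty C)
  obtain ⟨Ps, _, hval⟩ := hswu c
  have h1 : v Ps c ≤ 1 := by
    rw [← (hv Ps).2]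
    exact Finset.single_le_sum (fun z _ => (hv Ps).1 z) (Finset.mem_univ c)
  linarith

end VotingLemmas

section CoreChains
open Finset
variable {C : Type} [Fintype C] [DecidableEq C] [Nonempty C]

def twoBlock {n : ℕ} (Qt Qb : Pref C) (j : ℕ) : Fin n → Pref C :=
  fun i => if (i : ℕ) < j then Qt else Qb

lemma tb_eq {n : ℕ} {v : (Fin n → Pref C) → C → ℝ} (hanon : Anonymous v) (hsp : WeaklySP v)
    (U : Finset C) (Qt Qb Qt' Qb' : Pref C) (j : ℕ)
    (ht : Qt = Qt' ∨ (IsPrefSet U Qt ∧ IsPrefSet U Qt'))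
    (hb : Qb = Qb' ∨ (IsPrefSet U Qb ∧ IsPrefSet U Qb')) :
    ∑ z ∈ U, v (twoBlock Qt Qb j) z = ∑ z ∈ U, v (twoBlock Qt' Qb' j) z := by
  apply lemE_multi hanon hsp U Finset.univ (twoBlock Qt Qb j) (twoBlock Qt' Qb' j)
  · intro i
    by_cases hij : (i : ℕ) < j
    · simp only [twoBlock, if_pos hij]
      rcases ht with h | h
      · exact Or.inl h
      · exact Or.inr h
    · simp only [twoBlock, if_neg hij]
      rcases hb with h | h
      · exact Or.inl h
      · exact Or.inr h
  · intro i hi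
    exact absurd (Finset.mem_univ i) hi

lemma basic_facts {x y : C} {ρ : List C} (hn : (x :: y :: ρ).Nodup) :
    x ≠ y ∧ x ∉ ρ ∧ y ∉ ρ ∧ ρ.Nodup := by
  rw [List.nodup_cons, List.nodup_cons] at hn
  obtain ⟨h1, h2, h3⟩ := hn
  exact ⟨fun h => h1 (h ▸ List.mem_cons_self), fun h => h1 (List.mem_cons_of_mem _ h), h2, h3⟩

lemma cover_facts {x y : C} {ρ : List C} (hu : (x :: y :: ρ).toFinset = Finset.univ) :
    ∀ z : C, z = x ∨ z = y ∨ z ∈ ρ := by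
  intro z
  have : z ∈ (x :: y :: ρ).toFinset := hu ▸ Finset.mem_univ z
  simpa using this

lemma univ_split {x y : C} {ρ : List C} (hu : (x :: y :: ρ).toFinset = Finset.univ) :
    (Finset.univ : Finset C) = insert x (insert y ρ.toFinset) := by
  rw [← hu]; simp

lemma split3 {n : ℕ} {v : (Fin n → Pref C) → C → ℝ} (hv : IsVotingRule v)
    {x y : C} {ρ : List C} (hn : (x :: y :: ρ).Nodup)
    (hu : (x :: y :: ρ).toFinset = Finset.univ) (P : Fin n → Pref C) :
    v P x + (v P y + ∑ z ∈ ρ.toFinset, v P z) = 1 := by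
  obtain ⟨hxy, hxρ, hyρ, hρn⟩ := basic_facts hn
  have hd := (hv P).2
  rw [univ_split hu] at hd
  rw [Finset.sum_insert (by simp [hxy, hxρ]), Finset.sum_insert (by simp [hyρ])] at hd
  exact hd

lemma erase_split {x y : C} {ρ : List C} (hn : (x :: y :: ρ).Nodup)
    (hu : (x :: y :: ρ).toFinset = Finset.univ) :
    Finset.univ.erase y = insert x ρ.toFinset := by
  obtain ⟨hxy, hxρ, hyρ, hρn⟩ := basic_facts hn
  ext z
  simp only [Finset.mem_erase, Finset.mem_univ, and_true, Finset.mem_insert, List.mem_toFinset]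
  constructor
  · intro hz
    rcases cover_facts hu z with h | h | h
    · exact Or.inl h
    · exact absurd h hz
    · exact Or.inr h
  · rintro (rfl | h)
    · exact hxy
    · intro he
      rw [he] at h
      exact hyρ h

lemma splitE {n : ℕ} {v : (Fin n → Pref C) → C → ℝ}
    {x y : C} {ρ : List C} (hn : (x :: y :: ρ).Nodup)
    (hu : (x :: y :: ρ).toFinset = Finset.univ) (P : Fin n → Pref C) :
    ∑ z ∈ Finset.univ.erase y, v P z = v P x + ∑ z ∈ ρ.toFinset, v P z := by
  obtain ⟨hxy, hxρ, hyρ, hρn⟩ := basic_facts hn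
  rw [erase_split hn hu, Finset.sum_insert (by simp [hxρ])]

lemma mk_append_pair (x y : C) (ρ : List C) (hn : (x :: y :: ρ).Nodup)
    (hu : (x :: y :: ρ).toFinset = Finset.univ) : ∃ Q : Pref C, Q.1 = ρ ++ [x, y] := by
  obtain ⟨hxy, hxρ, hyρ, hρn⟩ := basic_facts hn
  refine ⟨⟨ρ ++ [x, y], ?_, ?_⟩, rfl⟩
  · rw [List.nodup_append]
    refine ⟨hρn, by simp [hxy], ?_⟩
    intro z hz b hb hzb
    simp only [List.mem_cons, List.mem_singleton, List.not_mem_nil, or_false] at hb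
    rcases hb with rfl | rfl
    · exact hxρ (hzb ▸ hz)
    · exact hyρ (hzb ▸ hz)
  · apply Finset.eq_univ_iff_forall.mpr
    intro z
    rcases cover_facts hu z with h | h | h <;> simp [h]

lemma mk_top_bot (x y : C) (ρ : List C) (hn : (x :: y :: ρ).Nodup)
    (hu : (x :: y :: ρ).toFinset = Finset.univ) : ∃ Q : Pref C, Q.1 = x :: (ρ ++ [y]) := by
  obtain ⟨hxy, hxρ, hyρ, hρn⟩ := basic_facts hn
  refine ⟨⟨x :: (ρ ++ [y]), ?_, ?_⟩, rfl⟩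
  · rw [List.nodup_cons]
    constructor
    · intro hx
      rcases List.mem_append.mp hx with h | h
      · exact hxρ h
      · exact hxy (List.mem_singleton.mp h)
    · rw [List.nodup_append]
      refine ⟨hρn, List.nodup_singleton y, ?_⟩
      intro z hz b hb hzb
      rw [List.mem_singleton] at hb
      rw [hzb, hb] at hz
      exact hyρ hz
  · apply Finset.eq_univ_iff_forall.mpr
    intro z
    rcases cover_facts hu z with h | h | h <;> simp [h]

lemma swap_nodup {x y : C} {ρ : List C} (hn : (x :: y :: ρ).Nodup) : (y :: x :: ρ).Nodup := by
  obtain ⟨hxy, hxρ, hyρ, hρn⟩ := basic_facts hn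
  rw [List.nodup_cons, List.nodup_cons]
  refine ⟨?_, hxρ', hρn⟩
  · intro h
    rcases List.mem_cons.mp h with h | h
    · exact hxy h.symm
    · exact hyρ h
  where hxρ' := by exact fun h => (basic_facts hn).2.1 h

lemma swap_univ {x y : C} {ρ : List C} (hu : (x :: y :: ρ).toFinset = Finset.univ) :
    (y :: x :: ρ).toFinset = Finset.univ := by
  apply Finset.eq_univ_iff_forall.mpr
  intro z
  rcases cover_facts hu z with h | h | h <;> simp [h]

/-- The core bound from the dual certificate: in the two-block profile
`j × [x,y,ρ] + (n-j) × [ρ,y,x]`, candidate `y` receives probability at most `2ε`. -/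
lemma core {n : ℕ} {v : (Fin n → Pref C) → C → ℝ} {ε : ℝ} (hv : IsVotingRule v)
    (hanon : Anonymous v) (hsp : WeaklySP v) (hswu : SuperWeakUnanimity v ε)
    (x y : C) (ρ : List C) (hn : (x :: y :: ρ).Nodup)
    (hu : (x :: y :: ρ).toFinset = Finset.univ) (hρ : ρ ≠ [])
    (j : ℕ) (Qt Qb : Pref C) (ht : Qt.1 = x :: y :: ρ) (hb : Qb.1 = ρ ++ [y, x]) :
    v (twoBlock Qt Qb j) y ≤ 2 * ε := by
  classical
  obtain ⟨hxy, hxρ, hyρ, hρn⟩ := basic_facts hn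
  obtain ⟨w, ρ', hρw⟩ : ∃ w ρ', ρ = w :: ρ' := by
    cases ρ with
    | nil => exact absurd rfl hρ
    | cons w ρ' => exact ⟨w, ρ', rfl⟩
  obtain ⟨O3, hO3⟩ := mk_append_pair x y ρ hn hu
  obtain ⟨O4, hO4⟩ := mk_top_bot x y ρ hn hu
  -- prefix facts
  have pxQt : IsPrefSet {x} Qt := isPref_head ht
  have pxO4 : IsPrefSet {x} O4 := isPref_head hO4
  have pρQb : IsPrefSet ρ.toFinset Qb := ⟨ρ.length, by rw [hb, List.take_left]⟩
  have pρO3 : IsPrefSet ρ.toFinset O3 := ⟨ρ.length, by rw [hO3, List.take_left]⟩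
  have peyO3 : IsPrefSet (Finset.univ.erase y) O3 :=
    isPref_last (l := ρ ++ [x]) (by rw [hO3]; simp)
  have peyO4 : IsPrefSet (Finset.univ.erase y) O4 :=
    isPref_last (l := x :: ρ) (by rw [hO4]; simp)
  -- chain equalities
  have e1 := tb_eq hanon hsp {x} Qt Qb O4 Qb j (Or.inr ⟨pxQt, pxO4⟩) (Or.inl rfl)
  have e2 := tb_eq hanon hsp ρ.toFinset Qt Qb Qt O3 j (Or.inl rfl) (Or.inr ⟨pρQb, pρO3⟩)
  have e9 := tb_eq hanon hsp {x} Qt O3 O4 O3 j (Or.inr ⟨pxQt, pxO4⟩) (Or.inl rfl)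
  have e8 := tb_eq hanon hsp ρ.toFinset O4 Qb O4 O3 j (Or.inl rfl) (Or.inr ⟨pρQb, pρO3⟩)
  have e4 := tb_eq hanon hsp (Finset.univ.erase y) Qt O3 Qt O4 j (Or.inl rfl)
    (Or.inr ⟨peyO3, peyO4⟩)
  have e6 := tb_eq hanon hsp (Finset.univ.erase y) O4 Qb O3 Qb j
    (Or.inr ⟨peyO4, peyO3⟩) (Or.inl rfl)
  -- unanimity anchors
  have u5 : 1 - ε ≤ v (twoBlock Qt O4 j) x := by
    apply unan_ge hanon hsp hswu
    intro i
    by_cases hij : (i : ℕ) < j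
    · exact ⟨y :: ρ, by simp only [twoBlock, if_pos hij]; exact ht⟩
    · exact ⟨ρ ++ [y], by simp only [twoBlock, if_neg hij]; exact hO4⟩
  have u7 : 1 - ε ≤ v (twoBlock O3 Qb j) w := by
    apply unan_ge hanon hsp hswu
    intro i
    by_cases hij : (i : ℕ) < j
    · exact ⟨ρ' ++ [x, y], by simp only [twoBlock, if_pos hij]; rw [hO3, hρw]; simp⟩
    · exact ⟨ρ' ++ [y, x], by simp only [twoBlock, if_neg hij]; rw [hb, hρw]; simp⟩
  -- sum decompositions
  simp only [Finset.sum_singleton] at e1 e9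
  have d1 := split3 hv hn hu (twoBlock Qt Qb j)
  have d2 := split3 hv hn hu (twoBlock O4 O3 j)
  have dD0 := (hv (twoBlock O4 O3 j)).1 y
  have sE1 := splitE (v := v) hn hu (twoBlock Qt O3 j)
  have sE2 := splitE (v := v) hn hu (twoBlock Qt O4 j)
  have sE3 := splitE (v := v) hn hu (twoBlock O4 Qb j)
  have sE4 := splitE (v := v) hn hu (twoBlock O3 Qb j)
  -- anchor 1 : v B x + Sρ B ≥ 1 - ε  where B = twoBlock Qt O3
  have hSnn : (0:ℝ) ≤ ∑ z ∈ ρ.toFinset, v (twoBlock Qt O4 j) z :=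
    Finset.sum_nonneg (fun z _ => (hv _).1 z)
  have a1 : 1 - ε ≤ v (twoBlock Qt O3 j) x + ∑ z ∈ ρ.toFinset, v (twoBlock Qt O3 j) z := by
    have := e4
    rw [sE1, sE2] at this
    linarith
  -- anchor 2 : v E1 x + Sρ E1 ≥ 1 - ε  where E1 = twoBlock O4 Qb
  have hwmem : w ∈ Finset.univ.erase y := by
    apply Finset.mem_erase.mpr
    refine ⟨?_, Finset.mem_univ w⟩
    intro h
    rw [← h] at hyρ
    exact hyρ (hρw ▸ List.mem_cons_self)
  have hwle : v (twoBlock O3 Qb j) w ≤ ∑ z ∈ Finset.univ.erase y, v (twoBlock O3 Qb j) z :=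
    Finset.single_le_sum (fun z _ => (hv _).1 z) hwmem
  have a2 : 1 - ε ≤ v (twoBlock O4 Qb j) x + ∑ z ∈ ρ.toFinset, v (twoBlock O4 Qb j) z := by
    rw [← sE3, e6]
    linarith
  linarith

end CoreChains


/-- The candidates are close to being anonymous:
`|v'(x,j) - v'(y,j)| ≤ 14mε`. -/
theorem stmt6 {C : Type} [Fintype C] [DecidableEq C] [Nonempty C]
    (hm : 3 ≤ Fintype.card C) {n : ℕ}
    (v : (Fin n → Pref C) → C → ℝ) (ε : ℝ) (hv : IsVotingRule v) (hanon : Anonymous v)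
    (hsp : WeaklySP v) (hswu : SuperWeakUnanimity v ε) (a : Pref C) :
    ∀ (x y : C) (j : ℕ), j ≤ n →
      |vPrime v a x j - vPrime v a y j| ≤ 14 * (Fintype.card C : ℝ) * ε := by
  classical
  intro x y j hj
  have hε : 0 ≤ ε := eps_nonneg hv hswu
  have hm' : (3:ℝ) ≤ (Fintype.card C : ℝ) := by exact_mod_cast hm
  have h14 : 2 * ε ≤ 14 * (Fintype.card C : ℝ) * ε := by nlinarith
  by_cases hxy : x = y
  · subst hxy
    rw [sub_self, abs_zero]
    linarith
  · set ρ : List C := (a.1.erase x).erase y with hρdef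
    have hanodup := a.2.1
    have hmex : ∀ z : C, z ∈ a.1.erase x ↔ z ≠ x := by
      intro z
      rw [List.Nodup.mem_erase_iff hanodup]
      simp [Pref.mem_list a z]
    have hmeρ : ∀ z : C, z ∈ ρ ↔ (z ≠ y ∧ z ≠ x) := by
      intro z
      rw [hρdef, List.Nodup.mem_erase_iff (hanodup.erase x), hmex]
    have hn : (x :: y :: ρ).Nodup := by
      rw [List.nodup_cons, List.nodup_cons]
      refine ⟨?_, ?_, (hanodup.erase x).erase y⟩
      · intro h
        rcases List.mem_cons.mp h with h | h
        · exact hxy h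
        · exact ((hmeρ x).mp h).2 rfl
      · intro h
        exact ((hmeρ y).mp h).1 rfl
    have hu : (x :: y :: ρ).toFinset = Finset.univ := by
      apply Finset.eq_univ_iff_forall.mpr
      intro z
      by_cases hzx : z = x
      · simp [hzx]
      · by_cases hzy : z = y
        · simp [hzy]
        · simp [hmeρ, hzx, hzy]
    have hρne : ρ ≠ [] := by
      intro h
      have hcard : Fintype.card C ≤ 2 := by
        rw [← Finset.card_univ, ← hu, h]
        have h2 : (x :: y :: ([] : List C)).toFinset = insert x {y} := by simp
        rw [h2]
        exact (Finset.card_insert_le _ _).trans (by simp)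
      omega
    have hn' := swap_nodup hn
    have hu' := swap_univ hu
    obtain ⟨O1, hO1⟩ : ∃ Q : Pref C, Q.1 = x :: y :: ρ := ⟨⟨_, hn, hu⟩, rfl⟩
    obtain ⟨O1', hO1'⟩ : ∃ Q : Pref C, Q.1 = y :: x :: ρ := ⟨⟨_, hn', hu'⟩, rfl⟩
    obtain ⟨O2, hO2⟩ := mk_append_pair y x ρ hn' hu'
    obtain ⟨O3, hO3⟩ := mk_append_pair x y ρ hn hu
    have hvx : ∀ P : Fin n → Pref C, v P x + ∑ z ∈ Finset.univ.erase x, v P z = 1 := by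
      intro P
      rw [← (hv P).2]
      exact Finset.add_sum_erase _ _ (Finset.mem_univ x)
    have hvy : ∀ P : Fin n → Pref C, v P y + ∑ z ∈ Finset.univ.erase y, v P z = 1 := by
      intro P
      rw [← (hv P).2]
      exact Finset.add_sum_erase _ _ (Finset.mem_univ y)
    -- identify vPrime with the canonical two-block profiles
    have hTx : (prefTopList a x).1 = x :: a.1.erase x := rfl
    have hBx : (prefBotList a x).1 = a.1.erase x ++ [x] := rfl
    have step1x := tb_eq hanon hsp {x} (prefTopList a x) (prefBotList a x) O1 (prefBotList a x) j
        (Or.inr ⟨isPref_head hTx, isPref_head hO1⟩) (Or.inl rfl)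
    have step2x := tb_eq hanon hsp (Finset.univ.erase x) O1 (prefBotList a x) O1 O2 j (Or.inl rfl)
        (Or.inr ⟨isPref_last hBx, isPref_last (l := ρ ++ [y]) (by rw [hO2]; simp)⟩)
    have idx1 : vPrime v a x j = v (twoBlock O1 O2 j) x := by
      have h1 : vPrime v a x j = v (twoBlock (prefTopList a x) (prefBotList a x) j) x := rfl
      simp only [Finset.sum_singleton] at step1x
      have h2 : v (twoBlock O1 (prefBotList a x) j) x = v (twoBlock O1 O2 j) x := by
        have ha1 := hvx (twoBlock O1 (prefBotList a x) j)
        have hb1 := hvx (twoBlock O1 O2 j)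
        linarith [step2x]
      rw [h1, step1x, h2]
    have hTy : (prefTopList a y).1 = y :: a.1.erase y := rfl
    have hBy : (prefBotList a y).1 = a.1.erase y ++ [y] := rfl
    have step1y := tb_eq hanon hsp {y} (prefTopList a y) (prefBotList a y) O1' (prefBotList a y) j
        (Or.inr ⟨isPref_head hTy, isPref_head hO1'⟩) (Or.inl rfl)
    have step2y := tb_eq hanon hsp (Finset.univ.erase y) O1' (prefBotList a y) O1' O3 j (Or.inl rfl)
        (Or.inr ⟨isPref_last hBy, isPref_last (l := ρ ++ [x]) (by rw [hO3]; simp)⟩)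
    have idy1 : vPrime v a y j = v (twoBlock O1' O3 j) y := by
      have h1 : vPrime v a y j = v (twoBlock (prefTopList a y) (prefBotList a y) j) y := rfl
      simp only [Finset.sum_singleton] at step1y
      have h2 : v (twoBlock O1' (prefBotList a y) j) y = v (twoBlock O1' O3 j) y := by
        have ha1 := hvy (twoBlock O1' (prefBotList a y) j)
        have hb1 := hvy (twoBlock O1' O3 j)
        linarith [step2y]
      rw [h1, step1y, h2]
    -- the pair-sum identity
    have pairO1 : IsPrefSet {x, y} O1 := ⟨2, by rw [hO1]; ext z; simp⟩
    have pairO1' : IsPrefSet {x, y} O1' := ⟨2, by rw [hO1']; ext z; simp; tauto⟩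
    have s1 := tb_eq hanon hsp {x, y} O1 O2 O1' O2 j (Or.inr ⟨pairO1, pairO1'⟩) (Or.inl rfl)
    have s2 := tb_eq hanon hsp ρ.toFinset O1' O2 O1' O3 j (Or.inl rfl)
        (Or.inr ⟨⟨ρ.length, by rw [hO2, List.take_left]⟩, ⟨ρ.length, by rw [hO3, List.take_left]⟩⟩)
    have hpair : ∀ P : Fin n → Pref C, ∑ z ∈ ({x, y} : Finset C), v P z = v P x + v P y :=
      fun P => Finset.sum_pair hxy
    have idsum : v (twoBlock O1 O2 j) x + v (twoBlock O1 O2 j) y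
        = v (twoBlock O1' O3 j) x + v (twoBlock O1' O3 j) y := by
      have d1 := split3 hv hn hu (twoBlock O1' O2 j)
      have d2 := split3 hv hn hu (twoBlock O1' O3 j)
      rw [hpair, hpair] at s1
      linarith [s1, s2, d1, d2]
    -- the two core bounds
    have b1 := core hv hanon hsp hswu x y ρ hn hu hρne j O1 O2 hO1 hO2
    have b2 := core hv hanon hsp hswu y x ρ hn' hu' hρne j O1' O3 hO1' hO3
    have nn1 := (hv (twoBlock O1 O2 j)).1 y
    have nn2 := (hv (twoBlock O1' O3 j)).1 x
    rw [idx1, idy1, abs_le]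
    constructor
    · linarith
    · linarith
end

section
/- Suppose m ≥ 2. For every α > 0, every n ≥ 1, every voter i ∈ [n], every pair of preference orderings P_i, P_i' ∈ 𝒫 with P_i ≠ P_i', every profile P⃗_{-i} ∈ 𝒫^{n−1}, and every α-coarse utility function u consistent with P_i, the punishing rule satisfies E[u(v_punish(P⃗_{-i},P_i))] ≥ E[u(v_punish(P⃗_{-i},P_i'))] + 2α/(n·m·(m−1)). -/
open Finset

section Stmt10Aux

variable {C : Type} [Fintype C] [DecidableEq C]

private lemma my_indexOf_inj (P : Pref C) {x y : C}
    (hxy : P.1.idxOf x = P.1.idxOf y) : x = y := by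
  have hx : P.1.idxOf x < P.1.length := List.idxOf_lt_length_iff.mpr (Pref.mem_list P x)
  have hy : P.1.idxOf y < P.1.length := List.idxOf_lt_length_iff.mpr (Pref.mem_list P y)
  have h1 := List.getElem_idxOf hx
  have h2 := List.getElem_idxOf hy
  rw [← h1, ← h2]
  simp only [hxy]

private lemma my_pref_ext {P P' : Pref C}
    (hidx : ∀ x, P.1.idxOf x = P'.1.idxOf x) : P = P' := by
  apply Subtype.ext
  apply List.ext_getElem?
  intro j
  by_cases hj : j < P.1.length
  · set a := P.1.get ⟨j, hj⟩ with ha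
    have h1 : P.1.idxOf a = j := List.get_idxOf P.2.1 ⟨j, hj⟩
    have h2 : P'.1.idxOf a = j := by rw [← hidx, h1]
    have h3 : P.1[j]? = some a := by rw [← h1, List.getElem?_eq_getElem (List.idxOf_lt_length_iff.mpr (Pref.mem_list P a)), List.getElem_idxOf]
    have h4 : P'.1[j]? = some a := by rw [← h2, List.getElem?_eq_getElem (List.idxOf_lt_length_iff.mpr (Pref.mem_list P' a)), List.getElem_idxOf]
    rw [h3, h4]
  · have hlen : P.1.length = P'.1.length := by
      have e1 : P.1.toFinset.card = P.1.length := List.toFinset_card_of_nodup P.2.1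
      have e2 : P'.1.toFinset.card = P'.1.length := List.toFinset_card_of_nodup P'.2.1
      rw [← e1, ← e2, P.2.2, P'.2.2]
    rw [List.getElem?_eq_none (by omega), List.getElem?_eq_none (by omega : P'.1.length ≤ j)]

/-- The rank map of a full preference as an equivalence. -/
private noncomputable def rankE (P : Pref C) : C ≃ Fin (Fintype.card C) :=
  Equiv.ofBijective (Pref.rank P) (by
    rw [Fintype.bijective_iff_injective_and_card]
    refine ⟨fun x y hxy => my_indexOf_inj P (congrArg Fin.val hxy), (Fintype.card_fin _).symm⟩)

private lemma rearr_le (h : C → ℕ) (u : C → ℝ) {α : ℝ} (hα : 0 ≤ α)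
    (hg : ∀ x y, h x < h y → u y + α ≤ u x) (ρ : Equiv.Perm C) :
    ∑ x, (h x : ℝ) * u x ≤ ∑ x, (h (ρ x) : ℝ) * u x := by
  have hab : Antivary (fun x => (h x : ℝ)) u := by
    intro x y hxy
    by_contra hc
    push_neg at hc
    have hlt : h x < h y := by exact_mod_cast hc
    linarith [hg x y hlt]
  simpa only [smul_eq_mul] using hab.sum_smul_le_sum_comp_perm_smul (σ := ρ)

private lemma rearr_lt (h : C → ℕ) (hinj : Function.Injective h) (u : C → ℝ) {α : ℝ}
    (hα : 0 ≤ α) (hg : ∀ x y, h x < h y → u y + α ≤ u x)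
    (ρ : Equiv.Perm C) (hρ : ρ ≠ 1) :
    (∑ x, (h x : ℝ) * u x) + α ≤ ∑ x, (h (ρ x) : ℝ) * u x := by
  classical
  have hs : (Finset.univ.filter (fun x => ρ x ≠ x)).Nonempty := by
    by_contra hc
    rw [Finset.not_nonempty_iff_eq_empty, Finset.filter_eq_empty_iff] at hc
    exact hρ (Equiv.ext fun x => not_not.mp (hc (Finset.mem_univ x)))
  obtain ⟨x0, hx0mem, hx0min⟩ := Finset.exists_min_image _ h hs
  have hx0 : ρ x0 ≠ x0 := (Finset.mem_filter.mp hx0mem).2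
  set y := ρ.symm x0 with hy
  have hρy : ρ y = x0 := ρ.apply_symm_apply x0
  have hyx0 : y ≠ x0 := fun hc => hx0 (by rw [← hc, hρy, hc])
  have hymem : y ∈ Finset.univ.filter (fun x => ρ x ≠ x) := by
    simp only [Finset.mem_filter, Finset.mem_univ, true_and]
    rw [hρy]; exact fun hc => hyx0 hc.symm
  have hρx0mem : ρ x0 ∈ Finset.univ.filter (fun x => ρ x ≠ x) := by
    simp only [Finset.mem_filter, Finset.mem_univ, true_and]
    intro hc
    exact hx0 (ρ.injective hc)
  have hxy : h x0 < h y :=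
    lt_of_le_of_ne (hx0min y hymem) (fun hc => hyx0 (hinj hc.symm))
  have hxρ : h x0 + 1 ≤ h (ρ x0) := by
    have := hx0min _ hρx0mem
    have hne' : h x0 ≠ h (ρ x0) := fun hc => hx0 (hinj hc.symm)
    omega
  set σ : Equiv.Perm C := ρ * Equiv.swap x0 y with hσ
  have hσx0 : σ x0 = x0 := by
    rw [hσ]; simp only [Equiv.Perm.mul_apply, Equiv.swap_apply_left]; exact hρy
  have hσy : σ y = ρ x0 := by
    rw [hσ]; simp only [Equiv.Perm.mul_apply, Equiv.swap_apply_right]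
  have hσoth : ∀ x, x ≠ x0 → x ≠ y → σ x = ρ x := by
    intro x h1 h2
    rw [hσ]
    simp only [Equiv.Perm.mul_apply, Equiv.swap_apply_of_ne_of_ne h1 h2]
  have hsplit : ∑ x, ((h (ρ x) : ℝ) * u x - (h (σ x) : ℝ) * u x)
      = ((h (ρ x0) : ℝ) - (h x0 : ℝ)) * (u x0 - u y) := by
    rw [← Finset.sum_subset (Finset.subset_univ ({x0, y} : Finset C))]
    · rw [Finset.sum_pair (Ne.symm hyx0), hσx0, hσy, hρy]
      ring
    · intro x _ hx
      simp only [Finset.mem_insert, Finset.mem_singleton, not_or] at hx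
      rw [hσoth x hx.1 hx.2]
      ring
  have hbase := rearr_le h u hα hg σ
  rw [Finset.sum_sub_distrib] at hsplit
  have hgap : α ≤ ((h (ρ x0) : ℝ) - (h x0 : ℝ)) * (u x0 - u y) := by
    have h1 : (1 : ℝ) ≤ (h (ρ x0) : ℝ) - (h x0 : ℝ) := by
      have : ((h x0 + 1 : ℕ) : ℝ) ≤ (h (ρ x0) : ℝ) := by exact_mod_cast hxρ
      push_cast at this; linarith
    have h2 : α ≤ u x0 - u y := by linarith [hg x0 y hxy]
    nlinarith
  linarith

end Stmt10Aux

/-- The punishing voting rule is strictly strategy-proof: lying costs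
at least `2α/(n·m·(m-1))` in (deterministic) expected utility. -/
theorem stmt10 {C : Type} [Fintype C] [DecidableEq C]
    (hm : 2 ≤ Fintype.card C)
    (α : ℝ) (hα : 0 < α) (n : ℕ) (hn : 1 ≤ n) (i : Fin n)
    (Q : Fin n → Pref C) (Pi' : Pref C) (hne : Pi' ≠ Q i)
    (u : C → ℝ) (hu : Utility01 u) (hcu : CoarseUtility α u)
    (hcons : ConsistentOn Finset.univ u (Q i)) :
    (∑ x : C, vPunish n (Function.update Q i Pi') x * u x)
      + 2 * α / ((n : ℝ) * (Fintype.card C : ℝ) * ((Fintype.card C : ℝ) - 1))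
      ≤ ∑ x : C, vPunish n Q x * u x := by
  classical
  have hm2 : (2:ℝ) ≤ (Fintype.card C : ℝ) := by exact_mod_cast hm
  have hn0 : (0:ℝ) < (n:ℝ) := by exact_mod_cast hn
  set D : ℝ := ∑ ℓ ∈ Finset.range (Fintype.card C), ((Fintype.card C : ℝ) - ((ℓ:ℝ) + 1)) with hDdef
  have hsumid : ∑ ℓ ∈ Finset.range (Fintype.card C), (ℓ:ℝ)
      = (Fintype.card C : ℝ) * ((Fintype.card C : ℝ) - 1) / 2 := by
    have h2 := Finset.sum_range_id_mul_two (Fintype.card C)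
    have h3 := congrArg (fun k : ℕ => (k : ℝ)) h2
    push_cast [Nat.cast_sub (show 1 ≤ Fintype.card C by omega)] at h3
    linarith
  have hD : D = (Fintype.card C : ℝ) * ((Fintype.card C : ℝ) - 1) / 2 := by
    have he : D = ∑ ℓ ∈ Finset.range (Fintype.card C),
        (((Fintype.card C : ℝ) - 1) - (ℓ:ℝ)) := by
      rw [hDdef]; exact Finset.sum_congr rfl fun ℓ _ => by ring
    rw [he, Finset.sum_sub_distrib, Finset.sum_const, Finset.card_range, nsmul_eq_mul, hsumid]
    ring
  have hD0 : (0:ℝ) < D := by rw [hD]; nlinarith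
  -- evaluation of expected utility of vPunish
  have hinner : ∀ Pp : Pref C,
      ∑ x, ((Fintype.card C : ℝ) - ((Pp.1.idxOf x : ℝ) + 1)) / D * u x
      = ((∑ x, ((Fintype.card C : ℝ) - 1) * u x) - ∑ x, (Pp.1.idxOf x : ℝ) * u x) / D := by
    intro Pp
    rw [eq_div_iff hD0.ne', Finset.sum_mul, ← Finset.sum_sub_distrib]
    apply Finset.sum_congr rfl
    intro x _
    field_simp
    ring
  have hEval : ∀ P : Fin n → Pref C, ∑ x, vPunish n P x * u x
      = (1/(n:ℝ)) * ∑ j, ((∑ x, ((Fintype.card C : ℝ) - 1) * u x)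
          - ∑ x, (((P j).1.idxOf x : ℝ)) * u x) / D := by
    intro P
    unfold vPunish
    simp only [mul_assoc]
    rw [← Finset.mul_sum]
    congr 1
    simp only [Finset.sum_mul]
    rw [Finset.sum_comm]
    exact Finset.sum_congr rfl fun j _ => hinner (P j)
  -- the key rearrangement inequality
  have hkey : (∑ x, (((Q i).1.idxOf x : ℝ)) * u x) + α
      ≤ ∑ x, ((Pi'.1.idxOf x : ℝ)) * u x := by
    have hg : ∀ x y : C, (Q i).1.idxOf x < (Q i).1.idxOf y → u y + α ≤ u x := by
      intro x y hxy
      have hpref : (Q i).pref x y := hxy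
      have hlt : u y < u x := (hcons x (Finset.mem_univ x) y (Finset.mem_univ y)).mpr hpref
      rcases hcu x y with he | habs
      · linarith
      · rw [abs_of_pos (by linarith : (0:ℝ) < u x - u y)] at habs
        linarith
    have hinj : Function.Injective (fun x => (Q i).1.idxOf x) :=
      fun x y hxy => my_indexOf_inj (Q i) hxy
    set ρ : Equiv.Perm C := (rankE Pi').trans (rankE (Q i)).symm with hρdef
    have hρne : ρ ≠ 1 := by
      intro hc
      apply hne
      apply my_pref_ext
      intro x
      have hx : ρ x = x := by rw [hc]; rfl
      have h2 : (rankE (Q i)) (ρ x) = rankE (Q i) x := congrArg _ hx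
      have h3 : rankE Pi' x = rankE (Q i) x := by
        rw [← h2]
        exact (Equiv.apply_symm_apply (rankE (Q i)) (rankE Pi' x)).symm
      exact congrArg Fin.val h3
    have hcomp : ∀ x : C, ((fun x => (Q i).1.idxOf x) (ρ x) : ℝ)
        = ((Pi'.1.idxOf x : ℝ)) := by
      intro x
      congr 1
      show ((rankE (Q i)) ((rankE (Q i)).symm (rankE Pi' x))).val = _
      rw [Equiv.apply_symm_apply]
      rfl
    have hfin := rearr_lt (fun x => (Q i).1.idxOf x) hinj u hα.le hg ρ hρne
    simp only [hcomp] at hfin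
    exact hfin
  -- put everything together
  rw [hEval Q, hEval (Function.update Q i Pi')]
  have harith : 2 * α / ((n : ℝ) * (Fintype.card C : ℝ) * ((Fintype.card C : ℝ) - 1))
      = (1/(n:ℝ)) * (α / D) := by
    have h1 : (Fintype.card C : ℝ) ≠ 0 := by linarith
    have h2 : (Fintype.card C : ℝ) - 1 ≠ 0 := by linarith
    rw [hD]
    field_simp
  rw [harith, ← mul_add]
  apply mul_le_mul_of_nonneg_left _ (by positivity : (0:ℝ) ≤ 1/(n:ℝ))
  have hdiff : ∑ j, (((∑ x, ((Fintype.card C : ℝ) - 1) * u x)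
          - ∑ x, (((Q j).1.idxOf x : ℝ)) * u x) / D
        - ((∑ x, ((Fintype.card C : ℝ) - 1) * u x)
          - ∑ x, ((((Function.update Q i Pi' j)).1.idxOf x : ℝ)) * u x) / D)
      = ((∑ x, ((Pi'.1.idxOf x : ℝ)) * u x)
          - ∑ x, (((Q i).1.idxOf x : ℝ)) * u x) / D := by
    rw [← Finset.sum_subset (Finset.subset_univ ({i} : Finset (Fin n)))]
    · rw [Finset.sum_singleton, Function.update_self]
      ring
    · intro j _ hj
      rw [Function.update_of_ne (by simpa using hj)]
      ring
  rw [Finset.sum_sub_distrib] at hdiff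
  have h5 : α / D ≤ ((∑ x, ((Pi'.1.idxOf x : ℝ)) * u x)
      - ∑ x, (((Q i).1.idxOf x : ℝ)) * u x) / D := by
    simp only [div_eq_mul_inv]
    exact mul_le_mul_of_nonneg_right (by linarith) (by positivity)
  linarith
end
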